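/- Assume κ⁰ > 0, κ¹ > 0 and that the pair is nondegenerate. Then the degeneracy set Λ = { λ ∈ (0,∞) : σ_{i,j}(λ) = 0 for some pair of indices (i,j) ≠ (1,1) } is countable and discrete (it has no accumulation points in (0,∞)); moreover Λ is the union of the range of a strictly increasing sequence tending to +∞ and the range of a strictly decreasing sequence tending to 0. -/

import Mathlib

open Filter Set

lemma enum_up (S : Set ℝ) (hS : S.Infinite) (hfin : ∀ C : ℝ, (S ∩ Set.Iic C).Finite) :
    ∃ u : ℕ → ℝ, StrictMono u ∧ Tendsto u atTop atTop ∧ S = Set.range u := by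
  have key : ∀ T : Set ℝ, T ⊆ S → T.Nonempty → ∃ y, IsLeast T y := by
    rintro T hTS ⟨t, ht⟩
    have hF : (T ∩ Set.Iic t).Finite :=
      (hfin t).subset (fun x hx => ⟨hTS hx.1, hx.2⟩)
    obtain ⟨y, hyF, hymin⟩ := hF.exists_minimalFor id _ ⟨t, ht, le_refl t⟩
    refine ⟨y, hyF.1, ?_⟩
    intro z hz
    rcases le_total z t with h | h
    · rcases le_total y z with h2 | h2
      · exact h2
      · exact hymin ⟨hz, h⟩ h2
    · exact hyF.2.trans h
  have hne : ∀ x : ℝ, (S ∩ Set.Ioi x).Nonempty := by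
    intro x
    rw [Set.nonempty_iff_ne_empty]
    intro h
    apply hS
    apply (hfin x).subset
    intro s hs
    refine ⟨hs, ?_⟩
    by_contra h2
    exact Set.eq_empty_iff_forall_notMem.1 h s ⟨hs, (lt_of_not_ge h2 : x < s)⟩
  have hleast : ∀ x : ℝ, ∃ y, IsLeast (S ∩ Set.Ioi x) y :=
    fun x => key _ (Set.inter_subset_left) (hne x)
  choose f hf using hleast
  obtain ⟨y0, hy0⟩ := key S (subset_refl S) hS.nonempty
  set u : ℕ → ℝ := fun n => Nat.rec y0 (fun _ p => f p) n with hu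
  have hu0 : u 0 = y0 := rfl
  have husucc : ∀ n, u (n + 1) = f (u n) := fun n => rfl
  have humem : ∀ n, u n ∈ S := by
    intro n
    cases n with
    | zero => exact hy0.1
    | succ k => exact (hf (u k)).1.1
  have humono : StrictMono u := by
    apply strictMono_nat_of_lt_succ
    intro n
    exact (hf (u n)).1.2
  have htend : Tendsto u atTop atTop := by
    rw [tendsto_atTop]
    intro C
    have hpre : {n : ℕ | u n < C}.Finite := by
      apply Set.Finite.subset ((hfin C).preimage (humono.injective.injOn))
      intro n hn
      exact ⟨humem n, Set.mem_Iic.2 (le_of_lt hn)⟩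
    obtain ⟨N, hN⟩ := hpre.bddAbove
    rw [eventually_atTop]
    refine ⟨N + 1, fun n hn => ?_⟩
    by_contra h2
    exact absurd (hN (lt_of_not_ge h2)) (by omega)
  refine ⟨u, humono, htend, ?_⟩
  apply Set.Subset.antisymm
  · intro s hs
    by_contra hns
    have hns' : ∀ n, u n ≠ s := by
      intro n h
      exact hns ⟨n, h⟩
    have hex : ∃ n, s < u n := (htend.eventually_gt_atTop s).exists
    have hfind := Nat.find_spec hex
    have hmin := fun k => Nat.find_min hex (m := k)
    cases hNf : Nat.find hex with
    | zero =>
      rw [hNf] at hfind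
      exact absurd (hy0.2 hs) (not_le.2 hfind)
    | succ k =>
      rw [hNf] at hfind
      have hk : ¬ s < u k := hmin k (by omega)
      have hk2 : u k < s := lt_of_le_of_ne (not_lt.1 hk) (hns' k)
      have := (hf (u k)).2 ⟨hs, hk2⟩
      rw [← husucc k] at this
      exact absurd this (not_le.2 hfind)
  · rintro _ ⟨n, rfl⟩
    exact humem n

lemma enum_down (S : Set ℝ) (hS : S.Infinite) (hpos : ∀ x ∈ S, 0 < x)
    (hfin : ∀ ε : ℝ, 0 < ε → (S ∩ Set.Ici ε).Finite) :
    ∃ v : ℕ → ℝ, StrictAnti v ∧ Tendsto v atTop (nhds 0) ∧ S = Set.range v := by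
  have hinj : Function.Injective (fun x : ℝ => x⁻¹) := inv_injective
  have hfin' : ∀ C : ℝ, (((fun x : ℝ => x⁻¹) '' S) ∩ Set.Iic C).Finite := by
    intro C
    rcases le_or_gt C 0 with hC | hC
    · apply Set.Finite.subset (Set.finite_empty)
      rintro z ⟨⟨x, hx, rfl⟩, hz2⟩
      simp only [Set.mem_Iic] at hz2
      exact absurd (lt_of_le_of_lt hz2 (lt_of_le_of_lt hC (inv_pos.2 (hpos x hx)))) (lt_irrefl _)
    · apply Set.Finite.subset (((hfin C⁻¹ (inv_pos.2 hC)).image (fun x : ℝ => x⁻¹)))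
      rintro z ⟨⟨x, hx, rfl⟩, hz2⟩
      simp only [Set.mem_Iic] at hz2
      refine ⟨x, ⟨hx, ?_⟩, rfl⟩
      exact (inv_le_comm₀ (hpos x hx) hC).1 hz2
  obtain ⟨u, hmono, htend, hrange⟩ := enum_up ((fun x : ℝ => x⁻¹) '' S)
    (hS.image (hinj.injOn)) hfin'
  refine ⟨fun n => (u n)⁻¹, ?_, ?_, ?_⟩
  · have hupos : ∀ n, 0 < u n := by
      intro n
      have : u n ∈ (fun x : ℝ => x⁻¹) '' S := by rw [hrange]; exact ⟨n, rfl⟩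
      obtain ⟨x, hx, hxe⟩ := this
      rw [← hxe]
      exact inv_pos.2 (hpos x hx)
    intro a b hab
    exact inv_strictAnti₀ (hupos a) (hmono hab)
  · exact tendsto_inv_atTop_zero.comp htend
  · have : Set.range (fun n => (u n)⁻¹) = (fun x : ℝ => x⁻¹) '' Set.range u := by
      ext z; simp [Set.range, Set.image]
    rw [this, ← hrange, ← Set.image_comp]
    have : ((fun x : ℝ => x⁻¹) ∘ (fun x : ℝ => x⁻¹)) '' S = S := by
      have : ∀ x ∈ S, ((fun x : ℝ => x⁻¹) ∘ (fun x : ℝ => x⁻¹)) x = x := by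
        intro x hx; simp
      rw [Set.EqOn.image_eq this]
      exact Set.image_id S
    rw [this]

theorem stmt_5
    (m : ℕ) (hm : 3 ≤ m)
    (κ₀ κ₁ : ℝ)
    (ρ₀ ρ₁ : ℕ → ℝ)
    (hρ₀one : ρ₀ 1 = 0) (hρ₁one : ρ₁ 1 = 0)
    (hρ₀mono : ∀ i j : ℕ, 1 ≤ i → i < j → ρ₀ i < ρ₀ j)
    (hρ₁mono : ∀ i j : ℕ, 1 ≤ i → i < j → ρ₁ i < ρ₁ j)
    (hρ₀unb : ∀ C : ℝ, ∃ i : ℕ, 1 ≤ i ∧ C < ρ₀ i)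
    (hρ₁unb : ∀ C : ℝ, ∃ j : ℕ, 1 ≤ j ∧ C < ρ₁ j)
    (σ : ℕ → ℕ → ℝ → ℝ)
    (hσ : ∀ (i j : ℕ) (l : ℝ), 0 < l →
      σ i j l = ρ₀ i + ρ₁ j / l - (κ₀ + κ₁ / l) / ((m : ℝ) - 1))
    (hκ₀ : 0 < κ₀) (hκ₁ : 0 < κ₁)
    (istar jstar : ℕ)
    (histar1 : 1 ≤ istar) (histar2 : κ₀ / ((m : ℝ) - 1) ≤ ρ₀ istar)
    (histar3 : ∀ i : ℕ, 1 ≤ i → i < istar → ρ₀ i < κ₀ / ((m : ℝ) - 1))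
    (hjstar1 : 1 ≤ jstar) (hjstar2 : κ₁ / ((m : ℝ) - 1) ≤ ρ₁ jstar)
    (hjstar3 : ∀ j : ℕ, 1 ≤ j → j < jstar → ρ₁ j < κ₁ / ((m : ℝ) - 1))
    (hnondeg : ¬ (ρ₀ istar = κ₀ / ((m : ℝ) - 1) ∧ ρ₁ jstar = κ₁ / ((m : ℝ) - 1)))
    (Λ : Set ℝ)
    (hΛ : Λ = {l : ℝ | 0 < l ∧ ∃ i j : ℕ, 1 ≤ i ∧ 1 ≤ j ∧ (i, j) ≠ (1, 1) ∧ σ i j l = 0}) :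
    Λ.Countable ∧
    (∀ x : ℝ, 0 < x → ∃ ε > (0 : ℝ), ∀ l ∈ Λ, l ≠ x → ε ≤ |l - x|) ∧
    (∃ u v : ℕ → ℝ, StrictMono u ∧ Filter.Tendsto u Filter.atTop Filter.atTop ∧
      StrictAnti v ∧ Filter.Tendsto v Filter.atTop (nhds 0) ∧
      Λ = Set.range u ∪ Set.range v) := by
  have hm1 : (0:ℝ) < (m:ℝ) - 1 := by
    have h3 : (3:ℝ) ≤ (m:ℝ) := by exact_mod_cast hm
    linarith
  set c₀ := κ₀ / ((m:ℝ) - 1) with hc₀def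
  set c₁ := κ₁ / ((m:ℝ) - 1) with hc₁def
  have hc₀ : 0 < c₀ := div_pos hκ₀ hm1
  have hc₁ : 0 < c₁ := div_pos hκ₁ hm1
  have ha1 : ρ₀ 1 - c₀ = -c₀ := by rw [hρ₀one]; ring
  have hb1 : ρ₁ 1 - c₁ = -c₁ := by rw [hρ₁one]; ring
  have hanonneg : ∀ i, istar ≤ i → 0 ≤ ρ₀ i - c₀ := by
    intro i hi
    rcases eq_or_lt_of_le hi with h | h
    · rw [← h]; linarith
    · linarith [hρ₀mono istar i histar1 h]
  have hbnonneg : ∀ j, jstar ≤ j → 0 ≤ ρ₁ j - c₁ := by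
    intro j hj
    rcases eq_or_lt_of_le hj with h | h
    · rw [← h]; linarith
    · linarith [hρ₁mono jstar j hjstar1 h]
  have hage : ∀ i, 1 ≤ i → -c₀ ≤ ρ₀ i - c₀ := by
    intro i hi
    rcases eq_or_lt_of_le hi with h | h
    · rw [← h, hρ₀one]; linarith
    · linarith [hρ₀mono 1 i (le_refl 1) h, hρ₀one]
  have hbge : ∀ j, 1 ≤ j → -c₁ ≤ ρ₁ j - c₁ := by
    intro j hj
    rcases eq_or_lt_of_le hj with h | h
    · rw [← h, hρ₁one]; linarith
    · linarith [hρ₁mono 1 j (le_refl 1) h, hρ₁one]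
  have hnz : ∀ i j, 1 ≤ i → 1 ≤ j → ρ₀ i - c₀ = 0 → ρ₁ j - c₁ = 0 → False := by
    intro i j hi hj h0 h1
    have hii : i = istar := by
      by_contra h
      rcases lt_or_gt_of_ne h with hlt | hgt
      · linarith [histar3 i hi hlt]
      · linarith [hρ₀mono istar i histar1 hgt]
    have hjj : j = jstar := by
      by_contra h
      rcases lt_or_gt_of_ne h with hlt | hgt
      · linarith [hjstar3 j hj hlt]
      · linarith [hρ₁mono jstar j hjstar1 hgt]
    exact hnondeg ⟨by rw [← hii]; linarith, by rw [← hjj]; linarith⟩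
  have hσ0 : ∀ (i j : ℕ) (l : ℝ), 0 < l →
      (σ i j l = 0 ↔ (ρ₀ i - c₀) * l = -(ρ₁ j - c₁)) := by
    intro i j l hl
    have hl' : l ≠ 0 := ne_of_gt hl
    have hm' : ((m:ℝ) - 1) ≠ 0 := ne_of_gt hm1
    rw [hσ i j l hl]
    have heq : ρ₀ i + ρ₁ j / l - (κ₀ + κ₁ / l) / ((m : ℝ) - 1)
        = ((ρ₀ i - c₀) * l + (ρ₁ j - c₁)) / l := by
      rw [hc₀def, hc₁def]; field_simp; ring
    rw [heq, div_eq_zero_iff]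
    constructor
    · rintro (h | h)
      · linarith
      · exact absurd h hl'
    · intro h; left; linarith
  set Λp : Set ℝ := {l : ℝ | ∃ i j : ℕ, 1 ≤ i ∧ 1 ≤ j ∧ ρ₀ i - c₀ < 0 ∧ 0 < ρ₁ j - c₁ ∧
      l = -(ρ₁ j - c₁) / (ρ₀ i - c₀)} with hΛpdef
  set Λm : Set ℝ := {l : ℝ | ∃ i j : ℕ, 1 ≤ i ∧ 1 ≤ j ∧ 0 < ρ₀ i - c₀ ∧ ρ₁ j - c₁ < 0 ∧
      l = -(ρ₁ j - c₁) / (ρ₀ i - c₀)} with hΛmdef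
  have hΛppos : ∀ l ∈ Λp, 0 < l := by
    rintro l ⟨i, j, hi, hj, hai, hbj, rfl⟩
    rw [neg_div]
    have := div_neg_of_pos_of_neg hbj hai
    linarith
  have hΛmpos : ∀ l ∈ Λm, 0 < l := by
    rintro l ⟨i, j, hi, hj, hai, hbj, rfl⟩
    rw [neg_div]
    have := div_neg_of_neg_of_pos hbj hai
    linarith
  have hdecomp : Λ = Λp ∪ Λm := by
    rw [hΛ]
    ext l
    simp only [Set.mem_setOf_eq, Set.mem_union, hΛpdef, hΛmdef]
    constructor
    · rintro ⟨hl, i, j, hi, hj, hne, hσz⟩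
      have hkey := (hσ0 i j l hl).1 hσz
      rcases lt_trichotomy (ρ₀ i - c₀) 0 with ha | ha | ha
      · left
        refine ⟨i, j, hi, hj, ha, ?_, ?_⟩
        · have := mul_neg_of_neg_of_pos ha hl
          linarith
        · rw [eq_div_iff (ne_of_lt ha)]
          linarith
      · exact absurd (by rw [ha, zero_mul] at hkey; linarith) (fun h => hnz i j hi hj ha h)
      · right
        refine ⟨i, j, hi, hj, ha, ?_, ?_⟩
        · have := mul_pos ha hl
          linarith
        · rw [eq_div_iff (ne_of_gt ha)]
          linarith
    · rintro (⟨i, j, hi, hj, hai, hbj, rfl⟩ | ⟨i, j, hi, hj, hai, hbj, rfl⟩)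
      · have hlpos : 0 < -(ρ₁ j - c₁) / (ρ₀ i - c₀) := by
          rw [neg_div]
          have := div_neg_of_pos_of_neg hbj hai
          linarith
        refine ⟨hlpos, i, j, hi, hj, ?_, ?_⟩
        · intro h
          simp only [Prod.mk.injEq] at h
          rw [h.2, hb1] at hbj
          linarith
        · rw [hσ0 i j _ hlpos, mul_comm, div_mul_cancel₀ _ (ne_of_lt hai)]
      · have hlpos : 0 < -(ρ₁ j - c₁) / (ρ₀ i - c₀) := by
          rw [neg_div]
          have := div_neg_of_neg_of_pos hbj hai
          linarith
        refine ⟨hlpos, i, j, hi, hj, ?_, ?_⟩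
        · intro h
          simp only [Prod.mk.injEq] at h
          rw [h.1, ha1] at hai
          linarith
        · rw [hσ0 i j _ hlpos, mul_comm, div_mul_cancel₀ _ (ne_of_gt hai)]
  have hΛpinf : Λp.Infinite := by
    apply Set.infinite_of_injective_forall_mem
      (f := fun k : ℕ => (ρ₁ (jstar + 1 + k) - c₁) / c₀)
    · intro k k' h
      simp only at h
      rw [div_eq_div_iff hc₀.ne' hc₀.ne'] at h
      have he : ρ₁ (jstar + 1 + k) = ρ₁ (jstar + 1 + k') := by
        have := mul_right_cancel₀ hc₀.ne' h
        linarith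
      rcases lt_trichotomy k k' with hlt | heq | hgt
      · exact absurd he (ne_of_lt (hρ₁mono _ _ (by omega) (by omega)))
      · exact heq
      · exact absurd he (ne_of_gt (hρ₁mono _ _ (by omega) (by omega)))
    · intro k
      have hbpos : 0 < ρ₁ (jstar + 1 + k) - c₁ := by
        linarith [hρ₁mono jstar (jstar + 1 + k) hjstar1 (by omega)]
      refine ⟨1, jstar + 1 + k, le_refl 1, by omega, by rw [ha1]; linarith, hbpos, ?_⟩
      rw [ha1, div_neg, neg_div, neg_neg]
  have hΛminf : Λm.Infinite := by
    have hapos : ∀ k : ℕ, 0 < ρ₀ (istar + 1 + k) - c₀ := by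
      intro k
      linarith [hρ₀mono istar (istar + 1 + k) histar1 (by omega)]
    apply Set.infinite_of_injective_forall_mem
      (f := fun k : ℕ => c₁ / (ρ₀ (istar + 1 + k) - c₀))
    · intro k k' h
      simp only at h
      rw [div_eq_div_iff (ne_of_gt (hapos k)) (ne_of_gt (hapos k'))] at h
      have he : ρ₀ (istar + 1 + k) = ρ₀ (istar + 1 + k') := by
        have := mul_left_cancel₀ hc₁.ne' h
        linarith
      rcases lt_trichotomy k k' with hlt | heq | hgt
      · exact absurd he (ne_of_lt (hρ₀mono _ _ (by omega) (by omega)))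
      · exact heq
      · exact absurd he (ne_of_gt (hρ₀mono _ _ (by omega) (by omega)))
    · intro k
      refine ⟨istar + 1 + k, 1, by omega, le_refl 1, hapos k, by rw [hb1]; linarith, ?_⟩
      rw [hb1, neg_neg]
  have hidx : ∀ (ρ : ℕ → ℝ), (∀ i j : ℕ, 1 ≤ i → i < j → ρ i < ρ j) →
      (∀ C : ℝ, ∃ i : ℕ, 1 ≤ i ∧ C < ρ i) →
      ∀ D : ℝ, {i : ℕ | 1 ≤ i ∧ ρ i ≤ D}.Finite := by
    intro ρ hmono hunb D
    obtain ⟨i₀, hi₀1, hi₀⟩ := hunb D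
    apply (Set.finite_Iic i₀).subset
    rintro i ⟨hi1, hiD⟩
    simp only [Set.mem_Iic]
    by_contra h
    push_neg at h
    exact absurd hiD (not_le.2 (lt_trans hi₀ (hmono i₀ i hi₀1 h)))
  have hΛpfin : ∀ C : ℝ, (Λp ∩ Set.Iic C).Finite := by
    intro C
    have hfinset : ((Set.Iio istar) ×ˢ {j : ℕ | 1 ≤ j ∧ ρ₁ j ≤ c₁ + C * c₀}).Finite :=
      (Set.finite_Iio istar).prod (hidx ρ₁ hρ₁mono hρ₁unb _)
    apply (hfinset.image (fun p : ℕ × ℕ => -(ρ₁ p.2 - c₁) / (ρ₀ p.1 - c₀))).subset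
    rintro l ⟨hmem, hlC⟩
    obtain ⟨i, j, hi, hj, hai, hbj, rfl⟩ := hmem
    simp only [Set.mem_Iic] at hlC
    have hlpos : 0 < -(ρ₁ j - c₁) / (ρ₀ i - c₀) :=
      hΛppos _ ⟨i, j, hi, hj, hai, hbj, rfl⟩
    refine ⟨(i, j), ⟨?_, hj, ?_⟩, rfl⟩
    · simp only [Set.mem_Iio]
      by_contra h
      push_neg at h
      exact absurd hai (not_lt.2 (hanonneg i h))
    · have h1 : ρ₁ j - c₁ = -(ρ₁ j - c₁) / (ρ₀ i - c₀) * -(ρ₀ i - c₀) := by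
        rw [neg_div, neg_mul_neg, div_mul_cancel₀ _ (ne_of_lt hai)]
      have h2 : -(ρ₀ i - c₀) ≤ c₀ := by linarith [hage i hi]
      have h3 : ρ₁ j - c₁ ≤ C * c₀ := by
        rw [h1]
        exact mul_le_mul hlC h2 (by linarith) (le_trans (le_of_lt hlpos) hlC)
      linarith
  have hΛmfin : ∀ ε : ℝ, 0 < ε → (Λm ∩ Set.Ici ε).Finite := by
    intro ε hε
    have hfinset : ({i : ℕ | 1 ≤ i ∧ ρ₀ i ≤ c₀ + c₁ / ε} ×ˢ (Set.Iio jstar)).Finite :=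
      (hidx ρ₀ hρ₀mono hρ₀unb _).prod (Set.finite_Iio jstar)
    apply (hfinset.image (fun p : ℕ × ℕ => -(ρ₁ p.2 - c₁) / (ρ₀ p.1 - c₀))).subset
    rintro l ⟨hmem, hlε⟩
    obtain ⟨i, j, hi, hj, hai, hbj, rfl⟩ := hmem
    simp only [Set.mem_Ici] at hlε
    have hlpos : 0 < -(ρ₁ j - c₁) / (ρ₀ i - c₀) :=
      hΛmpos _ ⟨i, j, hi, hj, hai, hbj, rfl⟩
    refine ⟨(i, j), ⟨⟨hi, ?_⟩, ?_⟩, rfl⟩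
    · have hane : (ρ₀ i - c₀) ≠ 0 := ne_of_gt hai
      have hmul : (ρ₀ i - c₀) * (-(ρ₁ j - c₁) / (ρ₀ i - c₀)) = -(ρ₁ j - c₁) := by
        field_simp
      have hbub : -(ρ₁ j - c₁) ≤ c₁ := by linarith [hbge j hj]
      have hdiv := div_le_div₀ (le_of_lt hc₁) hbub hε hlε
      have ha_eq : ρ₀ i - c₀ = -(ρ₁ j - c₁) / (-(ρ₁ j - c₁) / (ρ₀ i - c₀)) := by
        rw [eq_div_iff (ne_of_gt (lt_of_lt_of_le hε hlε))]
        linarith [hmul]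
      rw [← ha_eq] at hdiv
      linarith
    · simp only [Set.mem_Iio]
      by_contra h
      push_neg at h
      exact absurd hbj (not_lt.2 (hbnonneg j h))
  obtain ⟨u, humono, hutend, hurange⟩ := enum_up Λp hΛpinf hΛpfin
  obtain ⟨v, hvanti, hvtend, hvrange⟩ := enum_down Λm hΛminf hΛmpos hΛmfin
  refine ⟨?_, ?_, u, v, humono, hutend, hvanti, hvtend,
    by rw [hdecomp, hurange, hvrange]⟩
  · rw [hdecomp, hurange, hvrange]
    exact (Set.countable_range u).union (Set.countable_range v)
  · intro x hx
    have hfinx : (Λ ∩ Set.Icc (x/2) (2*x)).Finite := by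
      apply Set.Finite.subset ((hΛpfin (2*x)).union (hΛmfin (x/2) (by linarith)))
      rintro l ⟨hlΛ, hl1, hl2⟩
      rw [hdecomp] at hlΛ
      rcases hlΛ with h | h
      · exact Or.inl ⟨h, hl2⟩
      · exact Or.inr ⟨h, hl1⟩
    have hF : ((Λ ∩ Set.Icc (x/2) (2*x)) \ {x}).Finite := hfinx.diff
    have hTne : (insert (x/2) (hF.toFinset.image (fun l => |l - x|))).Nonempty :=
      ⟨x/2, Finset.mem_insert_self _ _⟩
    refine ⟨(insert (x/2) (hF.toFinset.image (fun l => |l - x|))).min' hTne, ?_, ?_⟩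
    · have hmem := Finset.min'_mem _ hTne
      rcases Finset.mem_insert.1 hmem with h | h
      · rw [h]; linarith
      · obtain ⟨l, hlF, hle⟩ := Finset.mem_image.1 h
        rw [Set.Finite.mem_toFinset] at hlF
        have hne : l ≠ x := by simpa using hlF.2
        rw [← hle]
        exact abs_pos.2 (sub_ne_zero.2 hne)
    · intro l hlΛ hlx
      rcases le_or_gt l (2*x) with h2 | h2
      · rcases le_or_gt (x/2) l with h1 | h1
        · have hlF : l ∈ hF.toFinset := by
            rw [Set.Finite.mem_toFinset]
            exact ⟨⟨hlΛ, h1, h2⟩, by simpa using hlx⟩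
          exact Finset.min'_le _ _ (Finset.mem_insert_of_mem (Finset.mem_image_of_mem _ hlF))
        · have hmin := (insert (x/2) (hF.toFinset.image (fun l => |l - x|))).min'_le (x/2) (Finset.mem_insert_self _ _)
          have habs : x/2 ≤ |l - x| := by
            rw [abs_sub_comm, abs_of_pos (by linarith)]
            linarith
          linarith
      · have hmin := (insert (x/2) (hF.toFinset.image (fun l => |l - x|))).min'_le (x/2) (Finset.mem_insert_self _ _)
        have habs : x/2 ≤ |l - x| := by
          rw [abs_of_pos (by linarith)]
          linarith
        linarith
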